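/- Let R = ⊕_{k,p} R_{k,p} be a bigraded commutative C-algebra, V a derivation of degree (2,0), μ ∈ C, and W the derivation acting on R_{k,p} as multiplication by k+μp. Then the Connes–Moscovici brackets specialize on homogeneous elements to χ_n^{[μ]}(f,g) = Σ_{r=0}^n (−1)^r · C(k+μp+n−1, n−r) · C(ℓ+μq+n−1, r) · V^r(f) · V^{n−r}(g) for f ∈ R_{k,p} and g ∈ R_{ℓ,q}, where C(x,m) = x(x−1)⋯(x−m+1)/m! denotes the generalized binomial coefficient; i.e., for f ∈ R_{k,p}, (1/(r!(n−r)!))·(V^r∘(W+r·Id)^{<n−r>})(f) = C(k+μp+n−1, n−r)·V^r(f) up to the stated combination. -/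

import Mathlib

open Finset

/-- The generalized binomial coefficient `C(x,m) = x(x−1)⋯(x−m+1)/m!`. -/
noncomputable def genBinom (x : ℂ) (m : ℕ) : ℂ :=
  (∏ i ∈ range m, (x - (i : ℂ))) / (m.factorial : ℂ)

/-- The Pochhammer iterate `F^{<m>}`: `F^{<0>} = Id`, `F^{<m>} = F^{<m−1>} ∘ (F + (m−1)·Id)`. -/
noncomputable def pochIter {A : Type*} [CommRing A] [Algebra ℂ A]
    (F : A →ₗ[ℂ] A) : ℕ → A →ₗ[ℂ] A
  | 0 => LinearMap.id
  | (m + 1) => (pochIter F m) ∘ₗ (F + (m : ℂ) • LinearMap.id)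

lemma poch_apply {A : Type*} [CommRing A] [Algebra ℂ A]
    (W : A →ₗ[ℂ] A) (a c : ℂ) (f : A) (hWf : W f = a • f) (m : ℕ) :
    pochIter (W + c • LinearMap.id) m f = (∏ j ∈ range m, (a + c + j)) • f := by
  induction m with
  | zero => simp [pochIter]
  | succ m ih =>
      rw [pochIter]
      simp only [LinearMap.comp_apply, LinearMap.add_apply, LinearMap.smul_apply,
        LinearMap.id_apply, hWf]
      rw [← add_smul, ← add_smul, map_smul, ih, smul_smul, Finset.prod_range_succ]
      ring_nf

lemma prod_shift (x : ℂ) (r m : ℕ) :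
    ∏ j ∈ range m, (x + ((r + m : ℕ) : ℂ) - 1 - j) = ∏ j ∈ range m, (x + r + j) := by
  rw [← Finset.prod_range_reflect (fun j => x + r + j) m]
  apply Finset.prod_congr rfl
  intro j hj
  simp only [mem_range] at hj
  have : ((m - 1 - j : ℕ) : ℂ) = (m : ℂ) - 1 - j := by
    rw [Nat.sub_sub, Nat.cast_sub (by omega : 1 + j ≤ m)]
    push_cast; ring
  rw [this]
  push_cast
  ring

/-- On a bigraded commutative `ℂ`-algebra with `V` of degree `(2,0)` and
`W` acting on `ℛ (k,p)` as `k+μp`, the Connes–Moscovici brackets specialize on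
homogeneous elements `f ∈ ℛ (k,p)`, `g ∈ ℛ (ℓ,q)` to
`χ_n^{[μ]}(f,g) = Σ_r (−1)^r C(k+μp+n−1,n−r) C(ℓ+μq+n−1,r) V^r(f) V^{n−r}(g)`. -/
theorem stmt9 (A : Type*) [CommRing A] [Algebra ℂ A]
    (ℛ : ℤ × ℤ → Submodule ℂ A)
    (V W : A →ₗ[ℂ] A) (μ : ℂ)
    (hV : ∀ (k p : ℤ), ∀ f ∈ ℛ (k, p), V f ∈ ℛ (k + 2, p))
    (hW : ∀ (k p : ℤ), ∀ f ∈ ℛ (k, p), W f = ((k : ℂ) + μ * (p : ℂ)) • f)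
    (n : ℕ) (k p ℓ q : ℤ) (f g : A)
    (hf : f ∈ ℛ (k, p)) (hg : g ∈ ℛ (ℓ, q)) :
    ∑ r ∈ range (n + 1),
      ((-1 : ℂ) ^ r / ((r.factorial : ℂ) * ((n - r).factorial : ℂ))) •
        (((V ^ r) (pochIter (W + (r : ℂ) • LinearMap.id) (n - r) f)) *
         ((V ^ (n - r)) (pochIter (W + ((n - r : ℕ) : ℂ) • LinearMap.id) r g)))
    = ∑ r ∈ range (n + 1),
      ((-1 : ℂ) ^ r * genBinom ((k : ℂ) + μ * (p : ℂ) + n - 1) (n - r)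
          * genBinom ((ℓ : ℂ) + μ * (q : ℂ) + n - 1) r) •
        ((V ^ r) f * (V ^ (n - r)) g) := by
  apply Finset.sum_congr rfl
  intro r hr
  simp only [mem_range] at hr
  have hr' : r ≤ n := by omega
  rw [poch_apply W ((k : ℂ) + μ * (p : ℂ)) (r : ℂ) f (hW k p f hf),
    poch_apply W ((ℓ : ℂ) + μ * (q : ℂ)) ((n - r : ℕ) : ℂ) g (hW ℓ q g hg),
    map_smul, map_smul, smul_mul_smul_comm, smul_smul]
  congr 1
  have h1 : ∏ j ∈ range (n - r), ((k : ℂ) + μ * (p : ℂ) + (r : ℂ) + j)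
      = ∏ j ∈ range (n - r), ((k : ℂ) + μ * (p : ℂ) + (n : ℂ) - 1 - j) := by
    have h := prod_shift ((k : ℂ) + μ * (p : ℂ)) r (n - r)
    rw [show r + (n - r) = n by omega] at h
    rw [← h]
  have h2 : ∏ j ∈ range r, ((ℓ : ℂ) + μ * (q : ℂ) + ((n - r : ℕ) : ℂ) + j)
      = ∏ j ∈ range r, ((ℓ : ℂ) + μ * (q : ℂ) + (n : ℂ) - 1 - j) := by
    have h := prod_shift ((ℓ : ℂ) + μ * (q : ℂ)) (n - r) r
    rw [show (n - r) + r = n by omega] at h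
    rw [← h]
  rw [genBinom, genBinom, ← h1, ← h2]
  have hf1 : ((n - r).factorial : ℂ) ≠ 0 := Nat.cast_ne_zero.2 (Nat.factorial_ne_zero _)
  have hf2 : (r.factorial : ℂ) ≠ 0 := Nat.cast_ne_zero.2 (Nat.factorial_ne_zero _)
  field_simp
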